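/- arXiv:2605.17568 — 2 statements merged into one kernel-verified Lean document; each statement's English description precedes it below -/
import Mathlib

section
/- For fixed real numbers a ≤ b and x < a, the soft-clipping function clip_s(x;a,b) = s·log(e^{x/s} + e^{a/s}) − s·log(e^{(x−b)/s} + 1) converges to a as s → 0⁺. -/
open Real Filter Set

noncomputable def softClip (s x a b : ℝ) : ℝ :=
  s * Real.log (Real.exp (x / s) + Real.exp (a / s)) -
    s * Real.log (Real.exp ((x - b) / s) + 1)

lemma aux_tendsto (c : ℝ) (hc : c < 0) :
    Tendsto (fun s : ℝ => s * Real.log (Real.exp (c / s) + 1))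
      (nhdsWithin 0 (Set.Ioi 0)) (nhds 0) := by
  have hdiv : Tendsto (fun s : ℝ => c / s) (nhdsWithin 0 (Set.Ioi 0)) atBot := by
    have : Tendsto (fun s : ℝ => c * s⁻¹) (nhdsWithin 0 (Set.Ioi 0)) atBot :=
      (tendsto_inv_nhdsGT_zero).const_mul_atTop_of_neg hc
    simpa [div_eq_mul_inv] using this
  have hexp : Tendsto (fun s : ℝ => Real.exp (c / s)) (nhdsWithin 0 (Set.Ioi 0)) (nhds 0) :=
    Real.tendsto_exp_atBot.comp hdiv
  have hmul : Tendsto (fun s : ℝ => s * Real.exp (c / s)) (nhdsWithin 0 (Set.Ioi 0)) (nhds 0) := by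
    simpa using ((tendsto_id (α := ℝ)).mono_left nhdsWithin_le_nhds).mul hexp
  refine squeeze_zero_norm' ?_ (by simpa using hmul.norm)
  filter_upwards [self_mem_nhdsWithin] with s hs
  have hs' : 0 < s := hs
  have hlog0 : 0 ≤ Real.log (Real.exp (c / s) + 1) :=
    Real.log_nonneg (le_add_of_nonneg_left (Real.exp_pos _).le)
  have hlog1 : Real.log (Real.exp (c / s) + 1) ≤ Real.exp (c / s) := by
    have := Real.add_one_le_exp (Real.log (Real.exp (c / s) + 1))
    calc Real.log (Real.exp (c / s) + 1) = Real.log (1 + Real.exp (c / s)) := by ring_nf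
    _ ≤ Real.exp (c / s) := Real.log_le_sub_one_of_pos (by positivity) |>.trans (by ring_nf; simp)
  rw [Real.norm_eq_abs, abs_mul, abs_of_nonneg hlog0]
  exact mul_le_mul_of_nonneg_left hlog1 (abs_nonneg s)

theorem softClip_tendsto_left (a b x : ℝ) (hab : a ≤ b) (hx : x < a) :
    Tendsto (fun s : ℝ => softClip s x a b) (nhdsWithin 0 (Set.Ioi 0)) (nhds a) := by
  have key : ∀ s ∈ Set.Ioi (0:ℝ), softClip s x a b =
      a + s * Real.log (Real.exp ((x - a) / s) + 1)
        - s * Real.log (Real.exp ((x - b) / s) + 1) := by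
    intro s hs
    have hs' : (0:ℝ) < s := hs
    have h1 : Real.exp (x / s) + Real.exp (a / s)
        = Real.exp (a / s) * (Real.exp ((x - a) / s) + 1) := by
      rw [mul_add, mul_one, ← Real.exp_add]
      ring_nf
    unfold softClip
    rw [h1, Real.log_mul (Real.exp_ne_zero _) (by positivity), Real.log_exp]
    field_simp
  have h1 := aux_tendsto (x - a) (by linarith)
  have h2 := aux_tendsto (x - b) (by linarith)
  have : Tendsto (fun s : ℝ => a + s * Real.log (Real.exp ((x - a) / s) + 1)
      - s * Real.log (Real.exp ((x - b) / s) + 1))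
      (nhdsWithin 0 (Set.Ioi 0)) (nhds a) := by
    have := ((tendsto_const_nhds (x := a)).add h1).sub h2
    simpa using this
  exact this.congr' (by filter_upwards [self_mem_nhdsWithin] with s hs using (key s hs).symm)
end

section
/- For x in the interior of the clipping interval, a < x < b, and fixed s with 0 < s, the soft-clipping function satisfies |clip_s(x;a,b) − x| ≤ 2s·log 2; in particular the approximation error tends to 0 uniformly on compact subsets of (a,b) as s → 0⁺. -/
open Real Filter Set

theorem softClip_error_bound (a b : ℝ) (hab : a < b) :
    (∀ s x : ℝ, 0 < s → a < x → x < b →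
      |softClip s x a b - x| ≤ 2 * s * Real.log 2) ∧
    ∀ K : Set ℝ, K ⊆ Set.Ioo a b → IsCompact K →
      TendstoUniformlyOn (fun (s : ℝ) (x : ℝ) => softClip s x a b) (fun x => x)
        (nhdsWithin 0 (Set.Ioi 0)) K := by
  have key : ∀ s x : ℝ, 0 < s → a < x → x < b →
      |softClip s x a b - x| ≤ 2 * s * Real.log 2 := by
    intro s x hs hax hxb
    have hlog2 : (0:ℝ) ≤ Real.log 2 := Real.log_nonneg (by norm_num)
    have h1 : x / s ≤ Real.log (Real.exp (x / s) + Real.exp (a / s)) := by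
      calc x / s = Real.log (Real.exp (x / s)) := (Real.log_exp _).symm
        _ ≤ _ := Real.log_le_log (Real.exp_pos _) (le_add_of_nonneg_right (Real.exp_pos _).le)
    have h2 : Real.log (Real.exp (x / s) + Real.exp (a / s)) ≤ x / s + Real.log 2 := by
      have hea : Real.exp (a / s) ≤ Real.exp (x / s) :=
        Real.exp_le_exp.mpr (div_le_div_of_nonneg_right hax.le hs.le)
      calc Real.log (Real.exp (x / s) + Real.exp (a / s))
          ≤ Real.log (2 * Real.exp (x / s)) := by
            apply Real.log_le_log (by positivity); linarith
        _ = Real.log 2 + (x / s) := by rw [Real.log_mul (by norm_num) (Real.exp_pos _).ne', Real.log_exp]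
        _ = x / s + Real.log 2 := by ring
    have h3 : 0 ≤ Real.log (Real.exp ((x - b) / s) + 1) := by
      apply Real.log_nonneg; linarith [(Real.exp_pos ((x - b) / s)).le]
    have h4 : Real.log (Real.exp ((x - b) / s) + 1) ≤ Real.log 2 := by
      have : Real.exp ((x - b) / s) ≤ 1 := by
        rw [Real.exp_le_one_iff]
        apply div_nonpos_of_nonpos_of_nonneg <;> linarith
      apply Real.log_le_log (by positivity); linarith
    rw [abs_le]
    unfold softClip
    constructor <;> nlinarith [mul_le_mul_of_nonneg_left h2 hs.le,
      mul_le_mul_of_nonneg_left h1 hs.le, mul_le_mul_of_nonneg_left h3 hs.le,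
      mul_le_mul_of_nonneg_left h4 hs.le, mul_div_cancel₀ x hs.ne']
  refine ⟨key, ?_⟩
  intro K hK _
  rw [Metric.tendstoUniformlyOn_iff]
  intro ε hε
  have htend : Tendsto (fun s : ℝ => 2 * s * Real.log 2) (nhdsWithin 0 (Set.Ioi 0)) (nhds 0) := by
    have : Tendsto (fun s : ℝ => 2 * s * Real.log 2) (nhds 0) (nhds (2 * 0 * Real.log 2)) := by
      exact (continuous_const.mul continuous_id).mul continuous_const |>.tendsto 0
    simpa using this.mono_left nhdsWithin_le_nhds
  filter_upwards [htend.eventually (eventually_lt_nhds hε) , self_mem_nhdsWithin]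
    with s hs1 hs2 x hx
  have hx' := hK hx
  have := key s x hs2 hx'.1 hx'.2
  rw [Real.dist_eq]
  calc |x - softClip s x a b| = |softClip s x a b - x| := abs_sub_comm _ _
    _ ≤ 2 * s * Real.log 2 := this
    _ < ε := hs1
end
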